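/- Let K be a complete nonarchimedean field and let x = Σ_{i≥0} aᵢ tⁱ be a nonzero power series with coefficients in K satisfying sup_i |aᵢ| < ∞ (i.e., x ∈ K⟦t⟧₀, the ring of bounded power series on the open unit disc). Then x is a unit in K⟦t⟧₀ if and only if the function r ↦ |x|_{e^{−r}} := sup_i |aᵢ| e^{−ri} is constant in some neighborhood of r = 0 within [0,∞). -/

import Mathlib

open Finset

/-- A power series with bounded coefficients, i.e. an element of `K⟦t⟧₀`. -/
def IsBoundedSeries {K : Type*} [NormedField K] (a : ℕ → K) : Prop :=
  BddAbove (Set.range fun i => ‖a i‖)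

/-- The Cauchy product of power series (the multiplication of `K⟦t⟧₀`). -/
def seriesMul {K : Type*} [NormedField K] (a b : ℕ → K) : ℕ → K :=
  fun i => ∑ j ∈ range (i + 1), a j * b (i - j)

/-- The `e^{−r}`-Gauss norm of a power series. -/
noncomputable def gaussNorm {K : Type*} [NormedField K] (a : ℕ → K) (r : ℝ) : ℝ :=
  ⨆ i : ℕ, ‖a i‖ * Real.exp (-r * i)

section Aux

variable {K : Type*} [NormedField K]

/-- Coefficients of the inverse power series of `a` (when `a 0` is invertible). -/
noncomputable def invCoeff (a : ℕ → K) : ℕ → K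
  | 0 => (a 0)⁻¹
  | (n + 1) => -(a 0)⁻¹ * ∑ j ∈ Finset.range (n + 1), a (j + 1) * invCoeff a (n - j)
  decreasing_by exact Nat.lt_succ_of_le (Nat.sub_le n j)

lemma seriesMul_invCoeff (a : ℕ → K) (h0 : a 0 ≠ 0) :
    seriesMul a (invCoeff a) = fun i => if i = 0 then (1 : K) else 0 := by
  funext n
  cases n with
  | zero =>
    simp [seriesMul, invCoeff, mul_inv_cancel₀ h0]
  | succ n =>
    have : seriesMul a (invCoeff a) (n + 1) =
        (∑ j ∈ Finset.range (n + 1), a (j + 1) * invCoeff a (n - j))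
          + a 0 * invCoeff a (n + 1) := by
      rw [seriesMul, Finset.sum_range_succ']
      simp
    rw [this]
    have hinv : invCoeff a (n + 1) =
        -(a 0)⁻¹ * ∑ j ∈ Finset.range (n + 1), a (j + 1) * invCoeff a (n - j) := by
      rw [invCoeff]
    rw [hinv]
    have : a 0 * (-(a 0)⁻¹ * ∑ j ∈ Finset.range (n + 1), a (j + 1) * invCoeff a (n - j))
        = -(∑ j ∈ Finset.range (n + 1), a (j + 1) * invCoeff a (n - j)) := by
      field_simp
    rw [this]
    simp

lemma invCoeff_norm_le [IsUltrametricDist K] (a : ℕ → K) (h0 : a 0 ≠ 0)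
    (h : ∀ i, ‖a i‖ ≤ ‖a 0‖) : ∀ n, ‖invCoeff a n‖ ≤ ‖a 0‖⁻¹ := by
  intro n
  induction n using Nat.strong_induction_on with
  | _ n ih =>
    match n with
    | 0 => rw [invCoeff, norm_inv]
    | (m + 1) =>
      rw [invCoeff]
      have hsum : ‖∑ j ∈ Finset.range (m + 1), a (j + 1) * invCoeff a (m - j)‖ ≤ 1 := by
        apply IsUltrametricDist.norm_sum_le_of_forall_le_of_nonneg zero_le_one
        intro j _
        rw [norm_mul]
        calc ‖a (j + 1)‖ * ‖invCoeff a (m - j)‖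
            ≤ ‖a 0‖ * ‖a 0‖⁻¹ := by
              apply mul_le_mul (h _) (ih _ (Nat.lt_succ_of_le (Nat.sub_le m j)))
                (norm_nonneg _) (norm_nonneg _)
          _ = 1 := mul_inv_cancel₀ (norm_ne_zero_iff.2 h0)
      calc ‖-(a 0)⁻¹ * ∑ j ∈ Finset.range (m + 1), a (j + 1) * invCoeff a (m - j)‖
          = ‖a 0‖⁻¹ * ‖∑ j ∈ Finset.range (m + 1), a (j + 1) * invCoeff a (m - j)‖ := by
            rw [norm_mul, norm_neg, norm_inv]
        _ ≤ ‖a 0‖⁻¹ * 1 :=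
            mul_le_mul_of_nonneg_left hsum (by positivity)
        _ = ‖a 0‖⁻¹ := mul_one _

/-- Existence of a minimal index attaining the maximum of a nonnegative
sequence tending to `0` with positive initial value. -/
lemma exists_minimal_maximizer (f : ℕ → ℝ)
    (hf : Filter.Tendsto f Filter.atTop (nhds 0)) (h0 : 0 < f 0) :
    ∃ m : ℕ, (∀ i, f i ≤ f m) ∧ ∀ j < m, f j < f m := by
  classical
  have hev : ∀ᶠ i in Filter.atTop, f i < f 0 := hf.eventually (gt_mem_nhds h0)
  obtain ⟨N, hN⟩ := Filter.eventually_atTop.1 hev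
  obtain ⟨m0, hm0mem, hm0⟩ := Finset.exists_max_image (Finset.range (N + 1)) f
    ⟨0, Finset.mem_range.2 (Nat.succ_pos N)⟩
  have hmax : ∀ i, f i ≤ f m0 := by
    intro i
    rcases le_or_gt i N with hi | hi
    · exact hm0 i (Finset.mem_range.2 (Nat.lt_succ_of_le hi))
    · exact le_trans (hN i hi.le).le
        (hm0 0 (Finset.mem_range.2 (Nat.succ_pos N)))
  have hP : ∃ m, ∀ i, f i ≤ f m := ⟨m0, hmax⟩
  refine ⟨Nat.find hP, Nat.find_spec hP, fun j hj => ?_⟩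
  have hle : f j ≤ f (Nat.find hP) := Nat.find_spec hP j
  rcases lt_or_eq_of_le hle with h' | h'
  · exact h'
  · exact absurd (fun i => (Nat.find_spec hP i).trans h'.ge) (Nat.find_min hP hj)

lemma coeff_pow_le_of_unit [IsUltrametricDist K] (a b : ℕ → K)
    (ha : IsBoundedSeries a) (hb : IsBoundedSeries b)
    (h : seriesMul a b = fun i => if i = 0 then (1 : K) else 0)
    {ρ : ℝ} (hρ0 : 0 < ρ) (hρ1 : ρ < 1) :
    ∀ i, ‖a i‖ * ρ ^ i ≤ ‖a 0‖ := by
  classical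
  have h00 : a 0 * b 0 = 1 := by
    have := congrFun h 0
    simpa [seriesMul] using this
  have ha0 : a 0 ≠ 0 := left_ne_zero_of_mul_eq_one h00
  have hb0 : b 0 ≠ 0 := right_ne_zero_of_mul_eq_one h00
  set f : ℕ → ℝ := fun i => ‖a i‖ * ρ ^ i with hf_def
  set g : ℕ → ℝ := fun i => ‖b i‖ * ρ ^ i with hg_def
  have hpow : Filter.Tendsto (fun i : ℕ => ρ ^ i) Filter.atTop (nhds 0) :=
    tendsto_pow_atTop_nhds_zero_of_lt_one hρ0.le hρ1
  obtain ⟨Ca, hCa⟩ := ha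
  obtain ⟨Cb, hCb⟩ := hb
  have hCa' : ∀ i, ‖a i‖ ≤ Ca := fun i => hCa ⟨i, rfl⟩
  have hCb' : ∀ i, ‖b i‖ ≤ Cb := fun i => hCb ⟨i, rfl⟩
  have hCa0 : 0 ≤ Ca := (norm_nonneg _).trans (hCa' 0)
  have hCb0 : 0 ≤ Cb := (norm_nonneg _).trans (hCb' 0)
  have hft : Filter.Tendsto f Filter.atTop (nhds 0) := by
    have : Filter.Tendsto (fun i : ℕ => Ca * ρ ^ i) Filter.atTop (nhds 0) := by
      simpa using hpow.const_mul Ca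
    refine squeeze_zero (fun i => by positivity) (fun i => ?_) this
    exact mul_le_mul_of_nonneg_right (hCa' i) (by positivity)
  have hgt : Filter.Tendsto g Filter.atTop (nhds 0) := by
    have : Filter.Tendsto (fun i : ℕ => Cb * ρ ^ i) Filter.atTop (nhds 0) := by
      simpa using hpow.const_mul Cb
    refine squeeze_zero (fun i => by positivity) (fun i => ?_) this
    exact mul_le_mul_of_nonneg_right (hCb' i) (by positivity)
  have hf0 : 0 < f 0 := by
    simp only [hf_def, pow_zero, mul_one]
    exact norm_pos_iff.2 ha0
  have hg0 : 0 < g 0 := by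
    simp only [hg_def, pow_zero, mul_one]
    exact norm_pos_iff.2 hb0
  obtain ⟨m, hm, hmmin⟩ := exists_minimal_maximizer f hft hf0
  obtain ⟨n, hn, hnmin⟩ := exists_minimal_maximizer g hgt hg0
  have hfm : 0 < f m := lt_of_lt_of_le hf0 (hm 0)
  have hgn : 0 < g n := lt_of_lt_of_le hg0 (hn 0)
  -- claim : m + n = 0
  have hmn : m + n = 0 := by
    by_contra hmn
    -- the (m+n)-th coefficient of a*b is nonzero, but it must be 0
    have hdom : ∀ j ∈ (Finset.range (m + n + 1)).erase m,
        ‖a j * b (m + n - j)‖ < ‖a m * b n‖ := by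
      intro j hj
      have hjm : j ≠ m := (Finset.mem_erase.1 hj).1
      have hjle : j ≤ m + n := Nat.lt_succ_iff.1 (Finset.mem_range.1 (Finset.mem_erase.1 hj).2)
      have key : f j * g (m + n - j) < f m * g n := by
        rcases lt_or_gt_of_ne hjm with hlt | hgt
        · calc f j * g (m + n - j) ≤ f j * g n :=
                mul_le_mul_of_nonneg_left (hn _) (by positivity)
            _ < f m * g n := by
                exact mul_lt_mul_of_pos_right (hmmin j hlt) hgn
        · have hsub : m + n - j < n := by omega
          calc f j * g (m + n - j) ≤ f m * g (m + n - j) :=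
                mul_le_mul_of_nonneg_right (hm _) (by positivity)
            _ < f m * g n := mul_lt_mul_of_pos_left (hnmin _ hsub) hfm
      have hfactor : ∀ k l : ℕ, k + l = m + n →
          ‖a k‖ * ‖b l‖ * ρ ^ (m + n) = f k * g l := by
        intro k l hkl
        simp only [hf_def, hg_def]
        rw [← hkl, pow_add]
        ring
      have h1 : ‖a j * b (m + n - j)‖ * ρ ^ (m + n) = f j * g (m + n - j) := by
        rw [norm_mul]
        exact hfactor j (m + n - j) (by omega)
      have h2 : ‖a m * b n‖ * ρ ^ (m + n) = f m * g n := by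
        rw [norm_mul]
        exact hfactor m n rfl
      have := key
      rw [← h1, ← h2] at this
      exact lt_of_mul_lt_mul_right this (by positivity)
    have hsplit : (0 : K) = a m * b n +
        ∑ j ∈ (Finset.range (m + n + 1)).erase m, a j * b (m + n - j) := by
      have hmem : m ∈ Finset.range (m + n + 1) := Finset.mem_range.2 (by omega)
      have := Finset.add_sum_erase (Finset.range (m + n + 1))
        (fun j => a j * b (m + n - j)) hmem
      have hzero : seriesMul a b (m + n) = 0 := by
        rw [h]; simp [hmn]; omega
      rw [seriesMul] at hzero
      calc (0:K) = ∑ j ∈ Finset.range (m + n + 1), a j * b (m + n - j) := hzero.symm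
        _ = a m * b n + ∑ j ∈ (Finset.range (m + n + 1)).erase m, a j * b (m + n - j) :=
          by simpa using this.symm
    have hTnorm : ‖∑ j ∈ (Finset.range (m + n + 1)).erase m, a j * b (m + n - j)‖
        < ‖a m * b n‖ := by
      have hne : ((Finset.range (m + n + 1)).erase m).Nonempty := by
        rcases Nat.eq_zero_or_pos n with hn0 | hn0
        · refine ⟨0, Finset.mem_erase.2 ⟨?_, Finset.mem_range.2 (by omega)⟩⟩
          omega
        · exact ⟨m + n, Finset.mem_erase.2 ⟨by omega, Finset.mem_range.2 (by omega)⟩⟩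
      calc ‖∑ j ∈ (Finset.range (m + n + 1)).erase m, a j * b (m + n - j)‖
          ≤ ((Finset.range (m + n + 1)).erase m).sup' hne
              (fun j => ‖a j * b (m + n - j)‖) :=
            hne.norm_sum_le_sup'_norm _
        _ < ‖a m * b n‖ := (Finset.sup'_lt_iff hne).2 hdom
    have : a m * b n = -(∑ j ∈ (Finset.range (m + n + 1)).erase m, a j * b (m + n - j)) := by
      linear_combination -hsplit
    rw [this, norm_neg] at hTnorm
    exact lt_irrefl _ hTnorm
  have hm0 : m = 0 := by omega
  intro i
  have := hm i
  rw [hm0] at this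
  simpa [hf_def] using this

end Aux

/-- Lemma (`L:criterion-unit-2`(a)): a nonzero bounded power series
`x = Σ aᵢ tⁱ ∈ K⟦t⟧₀` over a complete nonarchimedean field is a unit in `K⟦t⟧₀`
if and only if `r ↦ |x|_{e^{−r}}` is constant in a neighborhood of `r = 0`
within `[0, ∞)`. -/
theorem bounded_series_unit_iff
    (K : Type*) [NormedField K] [CompleteSpace K] [IsUltrametricDist K]
    (a : ℕ → K) (ha : IsBoundedSeries a) (hne : a ≠ 0) :
    (∃ b : ℕ → K, IsBoundedSeries b ∧
        seriesMul a b = fun i => if i = 0 then (1 : K) else 0) ↔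
    (∃ ε : ℝ, 0 < ε ∧ ∀ r₁ ∈ Set.Ico (0:ℝ) ε, ∀ r₂ ∈ Set.Ico (0:ℝ) ε,
        gaussNorm a r₁ = gaussNorm a r₂) := by
  -- the key intermediate condition: all coefficients are dominated by the constant one
  have main : (∀ i, ‖a i‖ ≤ ‖a 0‖) →
      ∀ r : ℝ, 0 ≤ r → gaussNorm a r = ‖a 0‖ := by
    intro h r hr
    have hb : ∀ i : ℕ, ‖a i‖ * Real.exp (-r * i) ≤ ‖a 0‖ := by
      intro i
      calc ‖a i‖ * Real.exp (-r * i) ≤ ‖a i‖ * 1 := by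
            apply mul_le_mul_of_nonneg_left _ (norm_nonneg _)
            rw [Real.exp_le_one_iff]
            have : (0:ℝ) ≤ r * i := by positivity
            linarith
        _ = ‖a i‖ := mul_one _
        _ ≤ ‖a 0‖ := h i
    apply le_antisymm
    · exact ciSup_le hb
    · rw [gaussNorm]
      have := le_ciSup (f := fun i : ℕ => ‖a i‖ * Real.exp (-r * i))
        ⟨‖a 0‖, Set.forall_mem_range.2 hb⟩ 0
      simpa using this
  constructor
  · rintro ⟨b, hb, hmul⟩
    -- from unit: ∀ ρ ∈ (0,1), ‖a i‖ρ^i ≤ ‖a 0‖, then let ρ → 1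
    have hcoef : ∀ i, ‖a i‖ ≤ ‖a 0‖ := by
      intro i
      have hev : ∀ᶠ ρ : ℝ in nhdsWithin 1 (Set.Iio 1),
          ‖a i‖ * ρ ^ i ≤ ‖a 0‖ := by
        filter_upwards [Ioo_mem_nhdsLT_of_mem (by simp : (1:ℝ) ∈ Set.Ioc (0:ℝ) 1)]
          with ρ hρ
        exact coeff_pow_le_of_unit a b ha hb hmul hρ.1 hρ.2 i
      have hlim : Filter.Tendsto (fun ρ : ℝ => ‖a i‖ * ρ ^ i)
          (nhdsWithin 1 (Set.Iio 1)) (nhds (‖a i‖)) := by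
        have hcont : Filter.Tendsto (fun ρ : ℝ => ‖a i‖ * ρ ^ i)
            (nhds 1) (nhds (‖a i‖ * 1 ^ i)) := by
          exact (Filter.Tendsto.const_mul _ ((continuous_pow i).tendsto 1))
        simpa using hcont.mono_left nhdsWithin_le_nhds
      exact le_of_tendsto hlim hev
    refine ⟨1, one_pos, fun r₁ hr₁ r₂ hr₂ => ?_⟩
    rw [main hcoef r₁ hr₁.1, main hcoef r₂ hr₂.1]
  · rintro ⟨ε, hε, hconst⟩
    -- constancy implies ∀ i, ‖a i‖ ≤ ‖a 0‖
    have hcoef : ∀ i, ‖a i‖ ≤ ‖a 0‖ := by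
      by_contra hcon
      push_neg at hcon
      obtain ⟨k, hk⟩ := hcon
      set S : ℝ := ⨆ i : ℕ, ‖a i‖ with hS_def
      have hiS : ∀ i, ‖a i‖ ≤ S := fun i => le_ciSup ha i
      have hkS : ‖a k‖ ≤ S := hiS k
      have hS0 : ‖a 0‖ < S := lt_of_lt_of_le hk hkS
      have hSpos : 0 < S := lt_of_le_of_lt (norm_nonneg _) hS0
      have hg0 : gaussNorm a 0 = S := by
        rw [gaussNorm, hS_def]
        congr 1
        funext i
        simp
      set r : ℝ := ε / 2 with hr_def
      have hr0 : 0 < r := by positivity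
      have hrε : r < ε := by linarith
      have heq : gaussNorm a r = S := by
        rw [← hg0]
        exact hconst r ⟨hr0.le, hrε⟩ 0 ⟨le_refl _, hε⟩
      have hub : gaussNorm a r ≤ max ‖a 0‖ (S * Real.exp (-r)) := by
        apply ciSup_le
        intro i
        rcases Nat.eq_zero_or_pos i with hi | hi
        · subst hi
          simp [le_max_iff]
        · refine le_max_of_le_right ?_
          have h1 : Real.exp (-r * i) ≤ Real.exp (-r) := by
            apply Real.exp_le_exp.2
            have hc : (1:ℝ) ≤ (i:ℝ) := by exact_mod_cast hi
            nlinarith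
          exact mul_le_mul (hiS _) h1 (Real.exp_pos _).le hSpos.le
      have hlt : max ‖a 0‖ (S * Real.exp (-r)) < S := by
        apply max_lt hS0
        have : Real.exp (-r) < 1 := by
          rw [Real.exp_lt_one_iff]
          linarith
        nlinarith
      rw [heq] at hub
      exact absurd (lt_of_le_of_lt hub hlt) (lt_irrefl S)
    -- then a 0 ≠ 0 and the explicit inverse works
    have ha0 : a 0 ≠ 0 := by
      intro h0
      apply hne
      funext i
      have := hcoef i
      rw [h0, norm_zero] at this
      exact norm_le_zero_iff.1 this
    refine ⟨invCoeff a, ?_, seriesMul_invCoeff a ha0⟩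
    exact ⟨‖a 0‖⁻¹, Set.forall_mem_range.2 (invCoeff_norm_le a ha0 hcoef)⟩
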